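/- For E > 0, the surface in ℍ¹ given by t² = E²(|z|² − E²), |z| ≥ E (i.e. the graphs t = ± sqrt(E²(x² + y² − E²))), is a minimal surface: the function f(x,y) = sqrt(E²(x² + y² − E²)) satisfies (f_y + x)² f_{xx} + (f_x − y)² f_{yy} − 2 (f_x − y)(f_y + x) f_{xy} = 0 wherever x² + y² > E². -/

import Mathlib

open Real

private lemma sqrt_arg_pos (E c a : ℝ) (hE : 0 < E) (h : 0 < a^2 + c) :
    0 < E^2*(a^2 + c) := by positivity

/-- derivative of `u ↦ √(E²(u²+c))`. -/
private lemma aux_d1 (E c a : ℝ) (hE : 0 < E) (h : 0 < a^2 + c) :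
    HasDerivAt (fun u => Real.sqrt (E^2*(u^2 + c)))
      (E^2*a / Real.sqrt (E^2*(a^2 + c))) a := by
  have hq := sqrt_arg_pos E c a hE h
  have hs : 0 < Real.sqrt (E^2*(a^2+c)) := Real.sqrt_pos.2 hq
  have h1 : HasDerivAt (fun u : ℝ => E^2*(u^2+c)) (E^2*(2*a)) a := by
    have := ((hasDerivAt_pow 2 a).add_const c).const_mul (E^2)
    simpa using this
  have h2 := (Real.hasDerivAt_sqrt hq.ne').comp a h1
  refine h2.congr_deriv ?_
  field_simp

/-- derivative of `u ↦ E²u/√(E²(u²+c))`. -/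
private lemma aux_d2 (E c a : ℝ) (hE : 0 < E) (h : 0 < a^2 + c) :
    HasDerivAt (fun u => E^2*u / Real.sqrt (E^2*(u^2 + c)))
      (E^4*c / (Real.sqrt (E^2*(a^2 + c)))^3) a := by
  have hq := sqrt_arg_pos E c a hE h
  have hs : 0 < Real.sqrt (E^2*(a^2+c)) := Real.sqrt_pos.2 hq
  have hr2 : (Real.sqrt (E^2*(a^2+c)))^2 = E^2*(a^2+c) := Real.sq_sqrt hq.le
  have hnum : HasDerivAt (fun u : ℝ => E^2*u) (E^2) a := by
    simpa using (hasDerivAt_id a).const_mul (E^2)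
  have h2 := hnum.div (aux_d1 E c a hE h) hs.ne'
  refine h2.congr_deriv ?_
  set r := Real.sqrt (E^2*(a^2+c)) with hrdef
  rw [div_eq_div_iff (by positivity) (by positivity)]
  field_simp
  linear_combination hr2

/-- derivative of `v ↦ E²k/√(E²(v²+c))`. -/
private lemma aux_d3 (E c k b : ℝ) (hE : 0 < E) (h : 0 < b^2 + c) :
    HasDerivAt (fun v => E^2*k / Real.sqrt (E^2*(v^2 + c)))
      (-(E^4*k*b) / (Real.sqrt (E^2*(b^2 + c)))^3) b := by
  have hq := sqrt_arg_pos E c b hE h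
  have hs : 0 < Real.sqrt (E^2*(b^2+c)) := Real.sqrt_pos.2 hq
  have hr2 : (Real.sqrt (E^2*(b^2+c)))^2 = E^2*(b^2+c) := Real.sq_sqrt hq.le
  have h2 := (hasDerivAt_const b (E^2*k)).div (aux_d1 E c b hE h) hs.ne'
  refine h2.congr_deriv ?_
  set r := Real.sqrt (E^2*(b^2+c)) with hrdef
  rw [div_eq_div_iff (by positivity) (by positivity)]
  field_simp
  ring

theorem catenoid_minimal (E : ℝ) (hE : 0 < E) (f fx fy fxx fyy fxy : ℝ → ℝ → ℝ)
    (hf : ∀ a b : ℝ, E^2 < a^2 + b^2 → f a b = Real.sqrt (E^2*(a^2 + b^2 - E^2)))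
    (hfx : ∀ a b : ℝ, E^2 < a^2 + b^2 → HasDerivAt (fun u => f u b) (fx a b) a)
    (hfy : ∀ a b : ℝ, E^2 < a^2 + b^2 → HasDerivAt (fun v => f a v) (fy a b) b)
    (hfxx : ∀ a b : ℝ, E^2 < a^2 + b^2 → HasDerivAt (fun u => fx u b) (fxx a b) a)
    (hfyy : ∀ a b : ℝ, E^2 < a^2 + b^2 → HasDerivAt (fun v => fy a v) (fyy a b) b)
    (hfxy : ∀ a b : ℝ, E^2 < a^2 + b^2 → HasDerivAt (fun v => fx a v) (fxy a b) b) :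
    ∀ a b : ℝ, E^2 < a^2 + b^2 →
      (fy a b + a)^2 * fxx a b + (fx a b - b)^2 * fyy a b
        - 2*(fx a b - b)*(fy a b + a)*fxy a b = 0 := by
  -- closed form of fx at any admissible point
  have hfx' : ∀ a b : ℝ, E^2 < a^2 + b^2 →
      fx a b = E^2*a / Real.sqrt (E^2*(a^2 + (b^2 - E^2))) := by
    intro a b h
    have hpos : 0 < a^2 + (b^2 - E^2) := by linarith
    have hev : ∀ᶠ u in nhds a, E^2 < u^2 + b^2 :=
      (isOpen_lt continuous_const (by fun_prop)).mem_nhds h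
    have hcong : (fun u => f u b) =ᶠ[nhds a]
        (fun u => Real.sqrt (E^2*(u^2 + (b^2 - E^2)))) := by
      filter_upwards [hev] with u hu
      rw [hf u b hu]; congr 1; ring
    exact (hfx a b h).unique ((aux_d1 E (b^2-E^2) a hE hpos).congr_of_eventuallyEq hcong)
  have hfy' : ∀ a b : ℝ, E^2 < a^2 + b^2 →
      fy a b = E^2*b / Real.sqrt (E^2*(b^2 + (a^2 - E^2))) := by
    intro a b h
    have hpos : 0 < b^2 + (a^2 - E^2) := by linarith
    have hev : ∀ᶠ v in nhds b, E^2 < a^2 + v^2 :=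
      (isOpen_lt continuous_const (by fun_prop)).mem_nhds h
    have hcong : (fun v => f a v) =ᶠ[nhds b]
        (fun v => Real.sqrt (E^2*(v^2 + (a^2 - E^2)))) := by
      filter_upwards [hev] with v hv
      rw [hf a v hv]; congr 1; ring
    exact (hfy a b h).unique ((aux_d1 E (a^2-E^2) b hE hpos).congr_of_eventuallyEq hcong)
  intro a b h
  have hpos : 0 < a^2 + b^2 - E^2 := by linarith
  have hq : 0 < E^2*(a^2+b^2-E^2) := by positivity
  set r := Real.sqrt (E^2*(a^2+b^2-E^2)) with hrdef
  have hr : 0 < r := Real.sqrt_pos.2 hq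
  have hr2 : r^2 = E^2*(a^2+b^2-E^2) := Real.sq_sqrt hq.le
  have hargx : a^2 + (b^2 - E^2) = a^2 + b^2 - E^2 := by ring
  have hargy : b^2 + (a^2 - E^2) = a^2 + b^2 - E^2 := by ring
  have hx : fx a b = E^2*a / r := by rw [hfx' a b h, hargx]
  have hy : fy a b = E^2*b / r := by rw [hfy' a b h, hargy]
  -- second derivatives
  have hxx : fxx a b = E^4*(b^2-E^2) / r^3 := by
    have hposx : 0 < a^2 + (b^2 - E^2) := by linarith
    have hev : ∀ᶠ u in nhds a, E^2 < u^2 + b^2 :=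
      (isOpen_lt continuous_const (by fun_prop)).mem_nhds h
    have hcong : (fun u => fx u b) =ᶠ[nhds a]
        (fun u => E^2*u / Real.sqrt (E^2*(u^2 + (b^2 - E^2)))) := by
      filter_upwards [hev] with u hu
      exact hfx' u b hu
    have := (aux_d2 E (b^2-E^2) a hE hposx).congr_of_eventuallyEq hcong
    rw [hargx] at this
    exact (hfxx a b h).unique this
  have hyy : fyy a b = E^4*(a^2-E^2) / r^3 := by
    have hposy : 0 < b^2 + (a^2 - E^2) := by linarith
    have hev : ∀ᶠ v in nhds b, E^2 < a^2 + v^2 :=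
      (isOpen_lt continuous_const (by fun_prop)).mem_nhds h
    have hcong : (fun v => fy a v) =ᶠ[nhds b]
        (fun v => E^2*v / Real.sqrt (E^2*(v^2 + (a^2 - E^2)))) := by
      filter_upwards [hev] with v hv
      exact hfy' a v hv
    have := (aux_d2 E (a^2-E^2) b hE hposy).congr_of_eventuallyEq hcong
    rw [hargy] at this
    exact (hfyy a b h).unique this
  have hxy : fxy a b = -(E^4*a*b) / r^3 := by
    have hposy : 0 < b^2 + (a^2 - E^2) := by linarith
    have hev : ∀ᶠ v in nhds b, E^2 < a^2 + v^2 :=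
      (isOpen_lt continuous_const (by fun_prop)).mem_nhds h
    have hcong : (fun v => fx a v) =ᶠ[nhds b]
        (fun v => E^2*a / Real.sqrt (E^2*(v^2 + (a^2 - E^2)))) := by
      filter_upwards [hev] with v hv
      rw [hfx' a v hv]; congr 2; ring
    have := (aux_d3 E (a^2-E^2) a b hE hposy).congr_of_eventuallyEq hcong
    rw [hargy] at this
    exact (hfxy a b h).unique this
  rw [hx, hy, hxx, hyy, hxy]
  field_simp
  linear_combination (-(E^6*(a^2+b^2))) * hr2
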